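/- Let F be twice differentiable on [0,U) with density f and survival S, and suppose w(v) = v - S(v)/f(v) is strictly increasing. Then for every ε with 0 ≤ ε < U, the function r_ε(v) = v - ε - S(v)/f(v-ε) is strictly increasing on its domain (ε, U). -/

import Mathlib

open Set

/-- If `w` is strictly monotone on `s`, `u ∈ s`, `Ioc u b ⊆ s` with `u < b`,
and `w` has derivative `L` at `u`, then `0 ≤ L`. -/
lemma aux_deriv_nonneg {w : ℝ → ℝ} {s : Set ℝ} {u L b : ℝ}
    (hmono : StrictMonoOn w s) (hu : u ∈ s) (hub : Ioc u b ⊆ s) (hub' : u < b)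
    (hL : HasDerivAt w L u) : 0 ≤ L := by
  have hL' : HasDerivWithinAt w L (Ioi u) u := hL.hasDerivWithinAt
  rw [hasDerivWithinAt_iff_tendsto_slope] at hL'
  have hne : u ∉ Ioi u := by simp
  rw [diff_singleton_eq_self hne] at hL'
  refine ge_of_tendsto hL' ?_
  filter_upwards [Ioc_mem_nhdsGT_of_mem ⟨le_refl u, hub'⟩] with t ht
  have h1 : w u < w t := hmono hu (hub ht) ht.1
  have h2 : 0 < t - u := sub_pos.2 ht.1
  simp only [slope_def_field, div_eq_mul_inv]
  exact mul_nonneg (sub_pos.2 h1).le (inv_nonneg.2 h2.le)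

/-- If `F` is twice differentiable on `[0, U)` with density `f > 0`,
survival `S`, and `w v = v - S v / f v` strictly increasing, then for every
`ε` with `0 ≤ ε < U`, the function `r_ε v = v - ε - S v / f (v - ε)` is
strictly increasing on `(ε, U)`. -/
theorem r_eps_strict_mono
    (U : ℝ) (hU : 0 < U)
    (f f' S : ℝ → ℝ)
    (hSderiv : ∀ v ∈ Ico 0 U, HasDerivAt S (-(f v)) v)
    (hfderiv : ∀ v ∈ Ico 0 U, HasDerivAt f (f' v) v)
    (hfpos : ∀ v ∈ Ico 0 U, 0 < f v)
    (hSpos : ∀ v ∈ Ico 0 U, 0 < S v)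
    (hw : StrictMonoOn (fun v => v - S v / f v) (Ico 0 U))
    (ε : ℝ) (hε0 : 0 ≤ ε) (hεU : ε < U) :
    StrictMonoOn (fun v => v - ε - S v / f (v - ε)) (Ioo ε U) := by
  rcases eq_or_lt_of_le hε0 with h0 | hεpos
  · -- ε = 0 : r coincides with w
    subst h0
    intro x hx y hy hxy
    have := hw ⟨hx.1.le, hx.2⟩ ⟨hy.1.le, hy.2⟩ hxy
    simpa using this
  -- ε > 0 : show the derivative is positive on (ε, U)
  -- derivative formula for r
  have hr : ∀ v ∈ Ioo ε U, HasDerivAt (fun v => v - ε - S v / f (v - ε))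
      (1 - ((-(f v)) * f (v - ε) - S v * (f' (v - ε) * 1)) / (f (v - ε))^2) v := by
    intro v hv
    have hvI : v ∈ Ico 0 U := ⟨le_of_lt (lt_of_le_of_lt hε0 hv.1), hv.2⟩
    have huI : v - ε ∈ Ico 0 U :=
      ⟨sub_nonneg.2 hv.1.le, lt_of_le_of_lt (by linarith : v - ε ≤ v) hv.2⟩
    have hfu : HasDerivAt (fun v => f (v - ε)) (f' (v - ε) * 1) v :=
      (hfderiv (v - ε) huI).comp v ((hasDerivAt_id v).sub_const ε)
    have hdiv : HasDerivAt (fun v => S v / f (v - ε))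
        (((-(f v)) * f (v - ε) - S v * (f' (v - ε) * 1)) / (f (v - ε))^2) v :=
      (hSderiv v hvI).div hfu (ne_of_gt (hfpos (v - ε) huI))
    exact (((hasDerivAt_id v).sub_const ε).sub hdiv).congr_deriv (by ring)
  apply strictMonoOn_of_deriv_pos (convex_Ioo ε U)
  · exact fun v hv => ((hr v hv).differentiableAt).continuousAt.continuousWithinAt
  intro v hv
  rw [interior_Ioo] at hv
  rw [(hr v hv).deriv]
  -- notation
  have hvI : v ∈ Ico 0 U := ⟨le_of_lt (lt_of_le_of_lt hε0 hv.1), hv.2⟩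
  have huI : v - ε ∈ Ico 0 U :=
    ⟨sub_nonneg.2 hv.1.le, lt_of_le_of_lt (by linarith : v - ε ≤ v) hv.2⟩
  set u := v - ε with hu_def
  set a := f u with ha_def
  set b := f v with hb_def
  set A := S u with hA_def
  set B := S v with hB_def
  set d := f' u with hd_def
  have ha : 0 < a := hfpos u huI
  have hb : 0 < b := hfpos v hvI
  have hA : 0 < A := hSpos u huI
  have hB : 0 < B := hSpos v hvI
  have huv : u < v := by simp only [hu_def]; linarith
  -- (1) from strict monotonicity of w between u and v : B/b < A/a + ε
  have h1 : B / b < A / a + ε := by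
    have := hw huI hvI huv
    simp only [← ha_def, ← hb_def, ← hA_def, ← hB_def] at this
    have hveq : v = u + ε := by simp [hu_def]
    rw [hveq] at this
    linarith
  have h1' : B * a < b * (A + ε * a) := by
    rw [div_lt_iff₀ hb] at h1
    have h1m := mul_lt_mul_of_pos_right h1 ha
    have e3 : (A / a + ε) * b * a = A * b + ε * b * a := by field_simp
    have goal_eq : b * (A + ε * a) = A * b + ε * b * a := by ring
    rw [goal_eq]
    linarith
  -- (2) Grönwall-type bound : B * (A + ε * a) < A ^ 2
  have h2' : B * (A + ε * a) < A ^ 2 := by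
    -- φ t = S t * (A / a + (t - u)) is strictly decreasing on [u, v]
    set φ : ℝ → ℝ := fun t => S t * (A / a + (t - u)) with hφ_def
    have hsub : Icc u v ⊆ Ico 0 U := fun t ht =>
      ⟨le_trans huI.1 ht.1, lt_of_le_of_lt ht.2 hv.2⟩
    have hφderiv : ∀ t ∈ Icc u v,
        HasDerivAt φ ((-(f t)) * (A / a + (t - u)) + S t * 1) t := by
      intro t ht
      exact (hSderiv t (hsub ht)).mul (((hasDerivAt_id t).sub_const u).const_add (A / a))
    have hanti : StrictAntiOn φ (Icc u v) := by
      apply strictAntiOn_of_deriv_neg (convex_Icc u v)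
      · exact fun t ht => ((hφderiv t ht).differentiableAt).continuousAt.continuousWithinAt
      intro t ht
      rw [interior_Icc] at ht
      rw [(hφderiv t (Ioo_subset_Icc_self ht)).deriv]
      have htI : t ∈ Ico 0 U := hsub (Ioo_subset_Icc_self ht)
      have hwt := hw huI htI ht.1
      simp only [← ha_def, ← hA_def] at hwt
      have hft : 0 < f t := hfpos t htI
      have hSt : 0 < S t := hSpos t htI
      have : S t / f t < A / a + (t - u) := by linarith
      rw [div_lt_iff₀ hft] at this
      nlinarith
    have hkey := hanti (left_mem_Icc.2 huv.le) (right_mem_Icc.2 huv.le) huv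
    simp only [hφ_def, sub_self, add_zero, ← hA_def, ← hB_def] at hkey
    have hveq : v - u = ε := by simp [hu_def]
    rw [hveq] at hkey
    -- hkey : B * (A / a + ε) < A * (A / a)
    have hm := mul_lt_mul_of_pos_right hkey ha
    have e1 : B * (A / a + ε) * a = B * A + B * ε * a := by field_simp
    have e2 : A * (A / a) * a = A ^ 2 := by field_simp
    have goal_eq : B * (A + ε * a) = B * A + B * ε * a := by ring
    rw [goal_eq]
    linarith
  -- (3) derivative of w at u is nonnegative : 0 ≤ 2 * a^2 + A * d
  have h3' : 0 ≤ 2 * a ^ 2 + A * d := by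
    have hwu : HasDerivAt (fun v => v - S v / f v)
        (1 - ((-(f u)) * f u - S u * f' u) / (f u) ^ 2) u :=
      (hasDerivAt_id u).sub ((hSderiv u huI).div (hfderiv u huI) (ne_of_gt (hfpos u huI)))
    have hb' : u < (u + U) / 2 := by
      have : u < U := huI.2
      linarith
    have hsub : Ioc u ((u + U) / 2) ⊆ Ico 0 U := by
      intro t ht
      constructor
      · exact le_trans huI.1 ht.1.le
      · have : u < U := huI.2
        have := ht.2
        linarith
    have h3 := aux_deriv_nonneg hw huI hsub hb' hwu
    simp only [← ha_def, ← hA_def, ← hd_def] at h3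
    rw [sub_nonneg, div_le_one (by positivity : (0:ℝ) < a ^ 2)] at h3
    nlinarith
  clear_value u a b A B d
  clear hr hw hSderiv hfderiv hfpos hSpos hvI huI hu_def ha_def hb_def hA_def hB_def hd_def
  -- final arithmetic
  rw [sub_pos, div_lt_one (by positivity : (0:ℝ) < a ^ 2)]
  -- goal : -b * a - B * (d * 1) < a ^ 2, i.e. 0 < a^2 + a*b + B*d
  have key : 0 < A * (A + ε * a) + A * B - 2 * B * (A + ε * a) := by
    nlinarith [mul_nonneg hA.le (sq_nonneg (A + ε * a - B)),
      mul_pos (sub_pos.2 h2') (by positivity : (0:ℝ) < A + ε * a + B),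
      (by positivity : (0:ℝ) < A + ε * a + B + 2 * A)]
  rcases le_or_gt 0 d with hd | hd
  · nlinarith [mul_pos ha hb, mul_nonneg hB.le hd, sq_nonneg a]
  · -- d < 0 : multiply goal by A * (A + ε * a) > 0
    have hE : 0 < A + ε * a := by positivity
    have hstep : A * B * d ≥ -2 * a ^ 2 * B := by nlinarith
    have t1 := mul_lt_mul_of_pos_left h1' (mul_pos hA ha)
    have t2 := mul_le_mul_of_nonneg_left hstep hE.le
    have t3 := mul_pos (mul_pos ha ha) key
    have hAE : 0 < A * (A + ε * a) := mul_pos hA hE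
    have big : 0 < (A * (A + ε * a)) * (a ^ 2 + a * b + B * d) := by
      linarith [t1, t2, t3]
    have goal' : 0 < a ^ 2 + a * b + B * d := by
      by_contra hc
      push_neg at hc
      have := mul_nonpos_of_nonneg_of_nonpos hAE.le hc
      linarith
    linarith
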